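/- Let (U, cl) be a closure space, A ⊆ U, and c ∈ U \ A. Then A is a D-generator of c if and only if c ∈ cl(A) and for every a ∈ A, c ∉ cl(cl^b(A) \ {a}). -/
import Mathlib


/-- `cl^b(A) = ⋃_{a ∈ A} cl({a})`. -/
def clb {U : Type*} (cl : Set U → Set U) (A : Set U) : Set U := ⋃ a ∈ A, cl {a}

/-- `A` is a minimal generator of `c`: `c ∉ A`, `c ∈ cl(A)` and no proper
subset of `A` generates `c`. -/
def MinGen {U : Type*} (cl : Set U → Set U) (c : U) (A : Set U) : Prop :=
  c ∉ A ∧ c ∈ cl A ∧ ∀ A' ⊂ A, c ∉ cl A'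

/-- `A` is a `D`-generator of `c`. -/
def DGen {U : Type*} (cl : Set U → Set U) (c : U) (A : Set U) : Prop :=
  MinGen cl c A ∧ c ∉ clb cl A ∧
    ∀ A', MinGen cl c A' → A' ⊆ clb cl A → A' = A

lemma exists_min_gen {U : Type*} [Fintype U] (cl : Set U → Set U) (c : U)
    (S : Set U) (hS : c ∈ cl S) :
    ∃ A', A' ⊆ S ∧ c ∈ cl A' ∧ ∀ B ⊂ A', c ∉ cl B := by
  have key : ∀ n (S : Set U), S.ncard ≤ n → c ∈ cl S →
      ∃ A', A' ⊆ S ∧ c ∈ cl A' ∧ ∀ B ⊂ A', c ∉ cl B := by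
    intro n
    induction n with
    | zero =>
      intro S hn hcS
      have hS0 : S = ∅ := (Set.ncard_eq_zero (Set.toFinite S)).mp (Nat.le_zero.mp hn)
      subst hS0
      exact ⟨∅, subset_rfl, hcS, fun B hB => absurd hB.subset (fun hs => hB.ne (Set.subset_empty_iff.mp hs))⟩
    | succ n ih =>
      intro S hn hcS
      by_cases h : ∀ B ⊂ S, c ∉ cl B
      · exact ⟨S, subset_rfl, hcS, h⟩
      · push_neg at h
        obtain ⟨B, hBS, hcB⟩ := h
        have hle : B.ncard ≤ n := by
          have := Set.ncard_lt_ncard hBS (Set.toFinite S)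
          omega
        obtain ⟨A', h1, h2, h3⟩ := ih B hle hcB
        exact ⟨A', h1.trans hBS.subset, h2, h3⟩
  exact key _ S le_rfl hS

/-- `A` is a `D`-generator of `c` iff `c ∈ cl(A)` and for every
`a ∈ A`, `c ∉ cl(cl^b(A) \ {a})`. -/
theorem stmt3 {U : Type*} [Fintype U] (cl : Set U → Set U)
    (hext : ∀ A : Set U, A ⊆ cl A)
    (hmono : ∀ A B : Set U, A ⊆ B → cl A ⊆ cl B)
    (hidem : ∀ A : Set U, cl (cl A) = cl A)
    (A : Set U) (c : U) (hc : c ∉ A) :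
    DGen cl c A ↔ (c ∈ cl A ∧ ∀ a ∈ A, c ∉ cl (clb cl A \ {a})) := by
  have hAclb : A ⊆ clb cl A := fun a ha => Set.mem_biUnion ha (hext {a} rfl)
  constructor
  · rintro ⟨⟨hcA, hcl, hmin⟩, hcb, huniq⟩
    refine ⟨hcl, ?_⟩
    intro a ha hcS
    obtain ⟨A', hA'S, hA'cl, hA'min⟩ := exists_min_gen cl c _ hcS
    have hmg : MinGen cl c A' :=
      ⟨fun h => hcb (hA'S h).1, hA'cl, hA'min⟩
    have heq : A' = A := huniq A' hmg (fun x hx => (hA'S hx).1)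
    exact (hA'S (heq ▸ ha)).2 rfl
  · rintro ⟨hcl, h⟩
    have hcb : c ∉ clb cl A := by
      intro hmem
      obtain ⟨a, ha, hca⟩ : ∃ a ∈ A, c ∈ cl {a} := by
        simpa [clb] using hmem
      exact h a ha (hext _ ⟨hmem, fun hce => hc (by rw [Set.mem_singleton_iff] at hce; exact hce ▸ ha)⟩)
    have hmg : MinGen cl c A := by
      refine ⟨hc, hcl, ?_⟩
      intro A' hA' hcA'
      obtain ⟨a, haA, haA'⟩ := Set.exists_of_ssubset hA'
      exact h a haA (hmono A' (clb cl A \ {a}) (fun x hx => ⟨hAclb (hA'.1 hx), fun he => haA' (he ▸ hx)⟩) hcA')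
    refine ⟨hmg, hcb, ?_⟩
    intro A' hA' hsub
    by_contra hne
    by_cases hAA' : A ⊆ A'
    · exact hA'.2.2 A ⟨hAA', fun h2 => hne (subset_antisymm h2 hAA')⟩ hcl
    · obtain ⟨a, haA, haA'⟩ := Set.not_subset.mp hAA'
      exact h a haA (hmono A' (clb cl A \ {a}) (fun x hx => ⟨hsub hx, fun he => haA' (he ▸ hx)⟩) hA'.2.1)
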